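/- Let Σ be a finite nonempty alphabet, P a stochastic language over Σ, and let A = (ι, (T_x)_{x∈Σ}, τ) be a multiplicity automaton with finite state set Q that is a reduced representation of P. Then the letter-sum matrix M = Σ_{x∈Σ} T_x has spectral radius ρ(M) < 1. -/

import Mathlib

open scoped BigOperators Matrix

/-- A stochastic language over the alphabet `A`: a nonnegative real-valued function on
words whose values are summable with sum `1`. -/
def IsStochastic {A : Type*} (p : List A → ℝ) : Prop :=
  (∀ w, 0 ≤ p w) ∧ HasSum p 1

/-- The matrix associated to a word: the product of the letter matrices. -/
def wordMat {A Q : Type*} [Fintype Q] [DecidableEq Q] (T : A → Matrix Q Q ℝ)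
    (w : List A) : Matrix Q Q ℝ :=
  (w.map T).prod

/-- The series computed by the multiplicity automaton `(ι, T, τ)`. -/
def maSeries {A Q : Type*} [Fintype Q] [DecidableEq Q] (ι τ : Q → ℝ)
    (T : A → Matrix Q Q ℝ) (w : List A) : ℝ :=
  ι ⬝ᵥ (wordMat T w).mulVec τ

/-- The series of state `q` of the multiplicity automaton. -/
def stateSeries {A Q : Type*} [Fintype Q] [DecidableEq Q] (τ : Q → ℝ)
    (T : A → Matrix Q Q ℝ) (q : Q) (w : List A) : ℝ :=
  (wordMat T w).mulVec τ q

/-- `(ι, T, τ)` is a reduced representation of the stochastic language `P`. -/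
def IsReducedRep {A Q : Type*} [Fintype Q] [DecidableEq Q] (ι τ : Q → ℝ)
    (T : A → Matrix Q Q ℝ) (P : List A → ℝ) : Prop :=
  maSeries ι τ T = P ∧ (∀ q, IsStochastic (stateSeries τ T q)) ∧
    LinearIndependent ℝ (stateSeries τ T)

/-- The spectral radius of a real square matrix: the maximum modulus of its complex
eigenvalues, i.e. the spectral radius of the corresponding complex matrix. -/
noncomputable def matSpectralRadius {Q : Type*} [Fintype Q] [DecidableEq Q]
    (M : Matrix Q Q ℝ) : ENNReal :=
  spectralRadius ℂ (M.map Complex.ofReal)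

namespace Statement7Aux

open Filter Topology

variable {A : Type*} [Fintype A] {Q : Type*} [Fintype Q] [DecidableEq Q]

noncomputable instance fintypeLen (A : Type*) [Fintype A] (n : ℕ) :
    Fintype {w : List A // w.length = n} :=
  Fintype.ofEquiv (List.Vector A n) (Equiv.refl _)

lemma wordMat_nil (T : A → Matrix Q Q ℝ) : wordMat T [] = 1 := rfl

lemma wordMat_cons (T : A → Matrix Q Q ℝ) (x : A) (w : List A) :
    wordMat T (x :: w) = T x * wordMat T w := by
  simp [wordMat]

lemma wordMat_append (T : A → Matrix Q Q ℝ) (w u : List A) :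
    wordMat T (w ++ u) = wordMat T w * wordMat T u := by
  simp [wordMat]

/-- Words of length `n+1` are a letter together with a word of length `n`. -/
def consEquiv (A : Type*) (n : ℕ) :
    (A × {w : List A // w.length = n}) ≃ {w : List A // w.length = n + 1} where
  toFun p := ⟨p.1 :: p.2.1, by simp [p.2.2]⟩
  invFun w :=
    match w with
    | ⟨[], h⟩ => absurd h (by simp)
    | ⟨x :: t, h⟩ => (x, ⟨t, by simpa using h⟩)
  left_inv p := rfl
  right_inv w := by
    obtain ⟨w, h⟩ := w
    cases w with
    | nil => simp at h
    | cons x t => rfl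

lemma sum_wordMat (T : A → Matrix Q Q ℝ) (n : ℕ) :
    ∑ w : {w : List A // w.length = n}, wordMat T w.1 = (∑ x : A, T x) ^ n := by
  induction n with
  | zero =>
      haveI : Unique {w : List A // w.length = 0} :=
        ⟨⟨⟨[], rfl⟩⟩, by
          rintro ⟨w, hw⟩
          rw [List.length_eq_zero_iff] at hw
          subst hw; rfl⟩
      rw [Fintype.sum_unique, pow_zero]
      have hd : ((default : {w : List A // w.length = 0}) : List A) = [] :=
        List.length_eq_zero_iff.mp (default : {w : List A // w.length = 0}).2
      rw [hd, wordMat_nil]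
  | succ n ih =>
      rw [← Equiv.sum_comp (consEquiv A n) (fun w => wordMat T w.1)]
      have : ∀ p : A × {w : List A // w.length = n},
          wordMat T ((consEquiv A n) p).1 = T p.1 * wordMat T p.2.1 := by
        rintro ⟨x, w, hw⟩
        exact wordMat_cons T x w
      rw [Fintype.sum_congr _ _ this, Fintype.sum_prod_type]
      rw [pow_succ']
      rw [← ih, Finset.sum_mul]
      congr 1
      ext x
      rw [Finset.mul_sum]

lemma sum_mulVec {ι : Type*} (s : Finset ι) (f : ι → Matrix Q Q ℝ) (v : Q → ℝ) :
    (∑ i ∈ s, f i) *ᵥ v = ∑ i ∈ s, f i *ᵥ v :=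
  map_sum (Matrix.mulVec.addMonoidHomLeft v) f s

lemma tendsto_lengthSum {f : List A → ℝ} (hf : Summable f) :
    Tendsto (fun n => ∑ w : {w : List A // w.length = n}, f w.1) atTop (𝓝 0) := by
  set e := Equiv.sigmaFiberEquiv (List.length : List A → ℕ) with he
  have h1 : Summable (f ∘ e) := hf.comp_injective e.injective
  have h2 : HasSum (fun n => ∑ w : {w : List A // w.length = n}, f w.1)
      (∑' x, (f ∘ e) x) :=
    h1.hasSum.sigma (fun n => hasSum_fintype _)
  exact h2.summable.tendsto_atTop_zero

lemma key (τ : Q → ℝ) (T : A → Matrix Q Q ℝ)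
    (hst : ∀ q, IsStochastic (stateSeries τ T q)) (u : List A) (q : Q) :
    Tendsto (fun n => (((∑ x : A, T x) ^ n) *ᵥ (wordMat T u *ᵥ τ)) q) atTop (𝓝 0) := by
  have hsum : Summable (fun w : List A => stateSeries τ T q (w ++ u)) :=
    ((hst q).2.summable).comp_injective (List.append_left_injective u)
  have h := tendsto_lengthSum hsum
  refine Tendsto.congr (fun n => ?_) h
  rw [Matrix.mulVec_mulVec, ← sum_wordMat T n, Finset.sum_mul, sum_mulVec,
    Finset.sum_apply]
  refine Finset.sum_congr rfl fun w _ => ?_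
  rw [stateSeries, wordMat_append]

lemma span_top (τ : Q → ℝ) (T : A → Matrix Q Q ℝ)
    (hli : LinearIndependent ℝ (stateSeries τ T)) :
    Submodule.span ℝ (Set.range fun u : List A => wordMat T u *ᵥ τ) = ⊤ := by
  by_contra h
  obtain ⟨φ, hφ0, hφ⟩ := Submodule.exists_dual_map_eq_bot_of_lt_top
    (lt_top_iff_ne_top.mpr h) inferInstance
  have hvan : ∀ u : List A, φ (wordMat T u *ᵥ τ) = 0 := by
    intro u
    have hmem : φ (wordMat T u *ᵥ τ) ∈
        Submodule.map φ (Submodule.span ℝ (Set.range fun u : List A => wordMat T u *ᵥ τ)) :=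
      Submodule.mem_map_of_mem (Submodule.subset_span ⟨u, rfl⟩)
    rw [hφ] at hmem
    simpa using hmem
  set c : Q → ℝ := fun q => φ (fun j => if q = j then 1 else 0) with hc
  have hrep : ∀ v : Q → ℝ, φ v = ∑ q, v q * c q := by
    intro v
    rw [LinearMap.pi_apply_eq_sum_univ φ v]
    simp [hc, smul_eq_mul]
  have hzero : (∑ q, c q • stateSeries τ T q) = 0 := by
    funext w
    rw [Finset.sum_apply]
    have : ∑ q, (c q • stateSeries τ T q) w = ∑ q, (wordMat T w *ᵥ τ) q * c q := by
      refine Finset.sum_congr rfl fun q _ => ?_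
      simp [stateSeries, mul_comm]
    rw [this, ← hrep, hvan]
    rfl
  have hc0 : ∀ q, c q = 0 := Fintype.linearIndependent_iff.mp hli c hzero
  refine hφ0 (LinearMap.ext fun v => ?_)
  rw [hrep]
  simp [hc0]

lemma tendsto_pow_mulVec (τ : Q → ℝ) (T : A → Matrix Q Q ℝ)
    (hst : ∀ q, IsStochastic (stateSeries τ T q))
    (hli : LinearIndependent ℝ (stateSeries τ T)) (v : Q → ℝ) (q : Q) :
    Tendsto (fun n => (((∑ x : A, T x) ^ n) *ᵥ v) q) atTop (𝓝 0) := by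
  set M := ∑ x : A, T x with hM
  let S : Submodule ℝ (Q → ℝ) :=
    { carrier := {v | ∀ q, Tendsto (fun n => ((M ^ n) *ᵥ v) q) atTop (𝓝 0)}
      add_mem' := by
        intro a b ha hb q
        have := (ha q).add (hb q)
        rw [add_zero] at this
        refine this.congr fun n => ?_
        rw [Matrix.mulVec_add]
        rfl
      zero_mem' := by
        intro q
        simpa [Matrix.mulVec_zero] using (tendsto_const_nhds : Tendsto (fun _ : ℕ => (0:ℝ)) atTop _)
      smul_mem' := by
        intro r a ha q
        have := (ha q).const_mul r
        rw [mul_zero] at this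
        refine this.congr fun n => ?_
        rw [Matrix.mulVec_smul]
        simp }
  have hv : v ∈ S := by
    have hS : Submodule.span ℝ (Set.range fun u : List A => wordMat T u *ᵥ τ) ≤ S :=
      Submodule.span_le.mpr (by rintro _ ⟨u, rfl⟩ q; exact key τ T hst u q)
    rw [span_top τ T hli] at hS
    exact hS trivial
  exact hv q

lemma eig_lt_one (M : Matrix Q Q ℝ)
    (hM : ∀ i j, Tendsto (fun n => (M ^ n) i j) atTop (𝓝 0))
    {μ : ℂ} (hμ : μ ∈ spectrum ℂ (M.map Complex.ofReal)) : ‖μ‖ < 1 := by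
  set Mc := M.map Complex.ofReal with hMcdef
  have hdet : (μ • (1 : Matrix Q Q ℂ) - Mc).det = 0 := by
    rw [spectrum.mem_iff, Algebra.algebraMap_eq_smul_one] at hμ
    by_contra hne
    exact hμ ((Matrix.isUnit_iff_isUnit_det _).mpr (isUnit_iff_ne_zero.mpr hne))
  obtain ⟨v, hv0, hv⟩ := Matrix.exists_mulVec_eq_zero_iff.mpr hdet
  have heig : Mc *ᵥ v = μ • v := by
    rw [Matrix.sub_mulVec, Matrix.smul_mulVec, Matrix.one_mulVec, sub_eq_zero] at hv
    exact hv.symm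
  have hpow : ∀ n, (Mc ^ n) *ᵥ v = μ ^ n • v := by
    intro n
    induction n with
    | zero => simp [Matrix.one_mulVec]
    | succ n ih =>
        rw [pow_succ', ← Matrix.mulVec_mulVec, ih, Matrix.mulVec_smul, heig,
          pow_succ', mul_smul]
        exact smul_comm _ _ _
  have hmap : ∀ n, Mc ^ n = (M ^ n).map Complex.ofReal := by
    intro n
    have := map_pow (Complex.ofRealHom.mapMatrix) M n
    exact this.symm
  obtain ⟨i, hvi⟩ := Function.ne_iff.mp hv0
  have hvi : v i ≠ 0 := hvi
  have h1 : Tendsto (fun n => ((Mc ^ n) *ᵥ v) i) atTop (𝓝 0) := by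
    have hterm : ∀ j : Q, Tendsto (fun n => ((M ^ n) i j : ℂ) * v j) atTop (𝓝 0) := by
      intro j
      have h := (Complex.continuous_ofReal.tendsto 0).comp (hM i j)
      rw [Complex.ofReal_zero] at h
      have := h.mul_const (v j)
      rwa [zero_mul] at this
    have hsum := tendsto_finset_sum (Finset.univ : Finset Q) (fun j _ => hterm j)
    rw [Finset.sum_const_zero] at hsum
    refine hsum.congr fun n => ?_
    rw [hmap]
    simp [Matrix.mulVec, dotProduct, Matrix.map_apply]
  have h2 : Tendsto (fun n => μ ^ n * v i) atTop (𝓝 0) := by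
    refine h1.congr fun n => ?_
    rw [hpow]
    simp
  have h3 : Tendsto (fun n => μ ^ n) atTop (𝓝 0) := by
    have := h2.mul_const (v i)⁻¹
    rw [zero_mul] at this
    refine this.congr fun n => ?_
    field_simp
  by_contra hge
  push_neg at hge
  have h4 := h3.norm
  rw [norm_zero] at h4
  have h5 := h4.eventually (gt_mem_nhds one_pos)
  obtain ⟨n, hn⟩ := h5.exists
  have : (1 : ℝ) ≤ ‖μ ^ n‖ := by
    rw [norm_pow]
    exact one_le_pow₀ hge
  linarith

end Statement7Aux

theorem statement7 {A Q : Type*} [Fintype A] [Nonempty A] [Fintype Q] [DecidableEq Q]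
    (P : List A → ℝ) (hP : IsStochastic P)
    (ι τ : Q → ℝ) (T : A → Matrix Q Q ℝ) (hred : IsReducedRep ι τ T P) :
    matSpectralRadius (∑ x : A, T x) < 1 := by
  obtain ⟨hser, hst, hli⟩ := hred
  have hent : ∀ i j, Filter.Tendsto (fun n => ((∑ x : A, T x) ^ n) i j)
      Filter.atTop (nhds 0) := by
    intro i j
    have := Statement7Aux.tendsto_pow_mulVec τ T hst hli (Pi.single j 1) i
    refine this.congr fun n => ?_
    simp [Matrix.mulVec_single]
  have hev : ∀ μ ∈ spectrum ℂ ((∑ x : A, T x).map Complex.ofReal), ‖μ‖ < 1 :=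
    fun μ hμ => Statement7Aux.eig_lt_one _ hent hμ
  have hfin := Matrix.finite_spectrum ((∑ x : A, T x).map Complex.ofReal)
  rw [matSpectralRadius, spectralRadius]
  simp only [← Set.Finite.mem_toFinset hfin]
  rw [← Finset.sup_eq_iSup]
  rw [Finset.sup_lt_iff (by simp : (⊥ : ENNReal) < 1)]
  intro μ hμ
  have := hev μ (hfin.mem_toFinset.mp hμ)
  exact_mod_cast this
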